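/- Let A, B be endomorphisms of a finite-dimensional complex vector space V such that every x in the subspace M satisfies B(A^k x) = 0 for all k ≥ 0. Then every vector in M is a 'B-free' state: exp(t(A+B)) x = exp(tA) x for all t ∈ ℝ. (Sufficiency direction of Theorem 1.) -/

import Mathlib

open NormedSpace

theorem exp_apply_eq_tsum {V : Type*} [NormedAddCommGroup V] [NormedSpace ℂ V]
    [FiniteDimensional ℂ V] (T : V →L[ℂ] V) (x : V) :
    exp T x = ∑' n : ℕ, ((n.factorial : ℂ)⁻¹) • (T ^ n) x := by
  rw [exp_eq_tsum ℂ]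
  have hs : Summable fun n : ℕ => ((n.factorial : ℂ)⁻¹) • T ^ n :=
    expSeries_summable' (𝕂 := ℂ) T
  have := ContinuousLinearMap.map_tsum (ContinuousLinearMap.apply ℂ V x) hs
  simpa using this

/-- If every `x` in the subspace `M` satisfies `B A^k x = 0` for all `k ≥ 0`, then every
vector of `M` is `B`-free: `exp(t(A+B)) x = exp(tA) x` for all real `t`. -/
theorem stmt8 {V : Type*} [NormedAddCommGroup V] [NormedSpace ℂ V]
    [FiniteDimensional ℂ V] (A B : V →L[ℂ] V) (M : Submodule ℂ V)
    (hM : ∀ x ∈ M, ∀ k : ℕ, B ((A ^ k) x) = 0) :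
    ∀ x ∈ M, ∀ t : ℝ, exp ((t : ℂ) • (A + B)) x = exp ((t : ℂ) • A) x := by
  intro x hx t
  have key : ∀ n : ℕ, ((A + B) ^ n) x = (A ^ n) x := by
    intro n
    induction n with
    | zero => simp
    | succ n ih =>
      rw [pow_succ', pow_succ']
      simp only [ContinuousLinearMap.mul_apply, ih, ContinuousLinearMap.add_apply,
        hM x hx n, add_zero]
  rw [exp_apply_eq_tsum, exp_apply_eq_tsum]
  congr 1
  funext n
  rw [smul_pow, smul_pow]
  simp [key n]
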